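/- In the single-item auction with M ≥ 2 bidders and expected profit π(r,F) = ∫_r^{θ̄} θ dF_{(2;M)}(θ) from reserve price r (interpreted as ∫ 1{θ ≥ r} dF_{(2;M)}), the profit is Lipschitz in F: |π(r,F) − π(r,G)| ≤ 2M(M−1)·‖F − G‖_∞ for all r ∈ Θ, and hence the auction value function Π(F) = sup_{r∈Θ} π(r,F) is Lipschitz with the same constant 2M(M−1). -/

import Mathlib

open Set

/-- Riemann–Stieltjes sum of `f` with respect to `g` over a tagged partition. -/
noncomputable def RSSum (f g : ℝ → ℝ) (n : ℕ) (t : Fin (n + 1) → ℝ) (ξ : Fin n → ℝ) : ℝ :=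
  ∑ i : Fin n, f (ξ i) * (g (t i.succ) - g (t i.castSucc))

/-- `I` is the Riemann–Stieltjes integral `∫_a^b f dg`. -/
def HasRSIntegral (f g : ℝ → ℝ) (a b I : ℝ) : Prop :=
  ∀ ε > (0 : ℝ), ∃ δ > (0 : ℝ), ∀ (n : ℕ) (t : Fin (n + 1) → ℝ) (ξ : Fin n → ℝ),
    Monotone t → t 0 = a → t (Fin.last n) = b →
    (∀ i : Fin n, t i.castSucc ≤ ξ i ∧ ξ i ≤ t i.succ ∧ t i.succ - t i.castSucc < δ) →
    |RSSum f g n t ξ - I| < ε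

lemma pow_lip {a b : ℝ} (ha0 : 0 ≤ a) (ha1 : a ≤ 1) (hb0 : 0 ≤ b) (hb1 : b ≤ 1) :
    ∀ k : ℕ, |a ^ k - b ^ k| ≤ k * |a - b| := by
  intro k
  induction k with
  | zero => simp
  | succ k ih =>
    have h1 : a ^ (k + 1) - b ^ (k + 1) = a * (a ^ k - b ^ k) + (a - b) * b ^ k := by ring
    have hab : |a| ≤ 1 := abs_le.mpr ⟨by linarith, ha1⟩
    have hbk : |b ^ k| ≤ 1 := by
      rw [abs_pow]
      exact pow_le_one₀ (abs_nonneg b) (abs_le.mpr ⟨by linarith, hb1⟩)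
    calc |a ^ (k + 1) - b ^ (k + 1)|
        ≤ |a * (a ^ k - b ^ k)| + |(a - b) * b ^ k| := by rw [h1]; exact abs_add_le _ _
      _ = |a| * |a ^ k - b ^ k| + |a - b| * |b ^ k| := by rw [abs_mul, abs_mul]
      _ ≤ 1 * (k * |a - b|) + |a - b| * 1 := by
          exact add_le_add (mul_le_mul hab ih (abs_nonneg _) zero_le_one)
            (mul_le_mul_of_nonneg_left hbk (abs_nonneg _))
      _ = (↑(k + 1) : ℝ) * |a - b| := by push_cast; ring

lemma phi_lip (M : ℕ) (hM : 2 ≤ M) {a b : ℝ}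
    (ha0 : 0 ≤ a) (ha1 : a ≤ 1) (hb0 : 0 ≤ b) (hb1 : b ≤ 1) :
    |((M : ℝ) * a ^ (M - 1) * (1 - a) + a ^ M) - ((M : ℝ) * b ^ (M - 1) * (1 - b) + b ^ M)|
      ≤ 2 * (M : ℝ) * ((M : ℝ) - 1) * |a - b| := by
  have hM1 : M - 1 + 1 = M := by omega
  have hid : ∀ x : ℝ, (M : ℝ) * x ^ (M - 1) * (1 - x) + x ^ M
      = (M : ℝ) * x ^ (M - 1) - ((M : ℝ) - 1) * x ^ M := by
    intro x
    have hx : x ^ M = x ^ (M - 1) * x := by rw [← pow_succ, hM1]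
    rw [hx]; ring
  rw [hid a, hid b]
  have hcast : ((M - 1 : ℕ) : ℝ) = (M : ℝ) - 1 := by
    push_cast [Nat.cast_sub (by omega : 1 ≤ M)]; ring
  have h1 : |a ^ (M - 1) - b ^ (M - 1)| ≤ ((M : ℝ) - 1) * |a - b| := by
    have := pow_lip ha0 ha1 hb0 hb1 (M - 1)
    rwa [hcast] at this
  have h2 : |a ^ M - b ^ M| ≤ (M : ℝ) * |a - b| := pow_lip ha0 ha1 hb0 hb1 M
  have hMR : (2 : ℝ) ≤ (M : ℝ) := by exact_mod_cast hM
  calc |((M : ℝ) * a ^ (M - 1) - ((M : ℝ) - 1) * a ^ M)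
        - ((M : ℝ) * b ^ (M - 1) - ((M : ℝ) - 1) * b ^ M)|
      = |(M : ℝ) * (a ^ (M - 1) - b ^ (M - 1)) - ((M : ℝ) - 1) * (a ^ M - b ^ M)| := by
        ring_nf
    _ ≤ |(M : ℝ) * (a ^ (M - 1) - b ^ (M - 1))| + |((M : ℝ) - 1) * (a ^ M - b ^ M)| :=
        abs_sub _ _
    _ = (M : ℝ) * |a ^ (M - 1) - b ^ (M - 1)| + ((M : ℝ) - 1) * |a ^ M - b ^ M| := by
        rw [abs_mul, abs_mul, abs_of_nonneg (by linarith : (0:ℝ) ≤ (M:ℝ)),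
          abs_of_nonneg (by linarith : (0:ℝ) ≤ (M:ℝ) - 1)]
    _ ≤ (M : ℝ) * (((M : ℝ) - 1) * |a - b|) + ((M : ℝ) - 1) * ((M : ℝ) * |a - b|) := by
        gcongr <;> linarith
    _ = 2 * (M : ℝ) * ((M : ℝ) - 1) * |a - b| := by ring

lemma tele_bound (n : ℕ) (u : ℕ → ℝ) (c : ℝ) (P : ℕ → Prop) [DecidablePred P]
    (hP : ∀ i j, i ≤ j → P i → P j)
    (hc : ∀ i ≤ n, |u i| ≤ c) (hun : u n = 0) :
    |∑ i ∈ Finset.range n, (if P i then (1 : ℝ) else 0) * (u (i + 1) - u i)| ≤ c := by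
  have hc0 : 0 ≤ c := le_trans (by simp [hun]) (hc n le_rfl)
  by_cases hex : ∃ i, i < n ∧ P i
  · obtain ⟨i₁, hi₁n, hPi₁⟩ := hex
    have hex' : ∃ i, P i := ⟨i₁, hPi₁⟩
    have hi₀le : Nat.find hex' ≤ i₁ := Nat.find_min' hex' hPi₁
    set i₀ := Nat.find hex' with hi₀
    have hi₀n : i₀ ≤ n := le_trans hi₀le (le_of_lt hi₁n)
    have hsum : ∑ i ∈ Finset.range n, (if P i then (1 : ℝ) else 0) * (u (i + 1) - u i)
        = ∑ i ∈ Finset.range n, (u (max (i + 1) i₀) - u (max i i₀)) := by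
      apply Finset.sum_congr rfl
      intro i _
      by_cases h : P i
      · have h2 : i₀ ≤ i := Nat.find_min' hex' h
        rw [if_pos h, max_eq_left (le_trans h2 (Nat.le_succ i)), max_eq_left h2]
        ring
      · have h2 : i < i₀ := by
          by_contra hcon
          exact h (hP i₀ i (le_of_not_gt hcon) (Nat.find_spec hex'))
        rw [if_neg h, max_eq_right (Nat.succ_le_of_lt h2), max_eq_right h2.le]
        ring
    rw [hsum, Finset.sum_range_sub (fun i => u (max i i₀)), max_eq_left hi₀n, hun,
      Nat.zero_max]
    simpa using hc i₀ hi₀n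
  · have hz : ∀ i ∈ Finset.range n, (if P i then (1 : ℝ) else 0) * (u (i + 1) - u i) = 0 := by
      intro i hi
      rw [if_neg (fun h => hex ⟨i, Finset.mem_range.mp hi, h⟩), zero_mul]
    rw [Finset.sum_congr rfl hz]
    simpa using hc0

lemma HasRSIntegral.sub' {f g g' : ℝ → ℝ} {a b I I' : ℝ}
    (h : HasRSIntegral f g a b I) (h' : HasRSIntegral f g' a b I') :
    HasRSIntegral f (fun t => g t - g' t) a b (I - I') := by
  intro ε hε
  obtain ⟨δ₁, hδ₁, H1⟩ := h (ε / 2) (by linarith)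
  obtain ⟨δ₂, hδ₂, H2⟩ := h' (ε / 2) (by linarith)
  refine ⟨min δ₁ δ₂, lt_min hδ₁ hδ₂, ?_⟩
  intro n t ξ hmono h0 hlast htag
  have e : RSSum f (fun t => g t - g' t) n t ξ = RSSum f g n t ξ - RSSum f g' n t ξ := by
    unfold RSSum
    rw [← Finset.sum_sub_distrib]
    apply Finset.sum_congr rfl
    intros
    ring
  have t1 := H1 n t ξ hmono h0 hlast (fun i =>
    ⟨(htag i).1, (htag i).2.1, lt_of_lt_of_le (htag i).2.2 (min_le_left _ _)⟩)
  have t2 := H2 n t ξ hmono h0 hlast (fun i =>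
    ⟨(htag i).1, (htag i).2.1, lt_of_lt_of_le (htag i).2.2 (min_le_right _ _)⟩)
  rw [e]
  have e2 : RSSum f g n t ξ - RSSum f g' n t ξ - (I - I')
      = (RSSum f g n t ξ - I) - (RSSum f g' n t ξ - I') := by ring
  rw [e2]
  calc |(RSSum f g n t ξ - I) - (RSSum f g' n t ξ - I')|
      ≤ |RSSum f g n t ξ - I| + |RSSum f g' n t ξ - I'| := abs_sub _ _
    _ < ε := by linarith

lemma key_bound (θl θu : ℝ) (hθ : θl ≤ θu) (f H : ℝ → ℝ) (I c : ℝ)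
    (hI : HasRSIntegral f H θl θu I)
    (hb : ∀ n : ℕ, 0 < n → ∀ s : ℝ, 0 ≤ s → θl + n * s = θu →
      |∑ i ∈ Finset.range n,
        f (θl + i * s) * (H (θl + ((i + 1 : ℕ) : ℝ) * s) - H (θl + i * s))| ≤ c) :
    |I| ≤ c := by
  refine le_of_forall_pos_le_add ?_
  intro ε hε
  obtain ⟨δ, hδ, hP⟩ := hI ε hε
  set n : ℕ := ⌈(θu - θl) / δ⌉₊ + 1 with hn
  have hn0 : 0 < n := Nat.succ_pos _
  have hnR : (0 : ℝ) < n := by exact_mod_cast hn0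
  set s : ℝ := (θu - θl) / n with hs
  have hs0 : 0 ≤ s := div_nonneg (by linarith) hnR.le
  have hsδ : s < δ := by
    rw [hs, div_lt_iff₀ hnR]
    have h1 : (θu - θl) / δ ≤ (⌈(θu - θl) / δ⌉₊ : ℝ) := Nat.le_ceil _
    have h2 : θu - θl ≤ (⌈(θu - θl) / δ⌉₊ : ℝ) * δ := (div_le_iff₀ hδ).mp h1
    have h3 : (n : ℝ) = (⌈(θu - θl) / δ⌉₊ : ℝ) + 1 := by rw [hn]; push_cast; ring
    nlinarith
  have hlast : θl + n * s = θu := by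
    rw [hs]
    field_simp
    ring
  set t : Fin (n + 1) → ℝ := fun j => θl + (j : ℕ) * s with ht
  set ξ : Fin n → ℝ := fun i => θl + (i : ℕ) * s with hξ
  have hmono : Monotone t := by
    intro i j hij
    have : ((i : ℕ) : ℝ) ≤ ((j : ℕ) : ℝ) := by exact_mod_cast hij
    simp only [ht]
    nlinarith
  have h0 : t 0 = θl := by simp [ht]
  have hlast' : t (Fin.last n) = θu := by
    simp only [ht, Fin.val_last]
    exact hlast
  have htag : ∀ i : Fin n, t i.castSucc ≤ ξ i ∧ ξ i ≤ t i.succ ∧ t i.succ - t i.castSucc < δ := by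
    intro i
    simp only [ht, hξ, Fin.coe_castSucc, Fin.val_succ]
    push_cast
    refine ⟨le_rfl, by nlinarith, by nlinarith⟩
  have hclose := hP n t ξ hmono h0 hlast' htag
  have hsum : RSSum f H n t ξ = ∑ i ∈ Finset.range n,
      f (θl + i * s) * (H (θl + ((i + 1 : ℕ) : ℝ) * s) - H (θl + i * s)) := by
    unfold RSSum
    rw [← Fin.sum_univ_eq_sum_range (fun k : ℕ =>
      f (θl + k * s) * (H (θl + ((k + 1 : ℕ) : ℝ) * s) - H (θl + k * s))) n]
    apply Finset.sum_congr rfl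
    intro i _
    simp only [ht, hξ, Fin.coe_castSucc, Fin.val_succ]
  have hSb := hb n hn0 s hs0 hlast
  rw [hsum] at hclose
  set S := ∑ i ∈ Finset.range n,
    f (θl + i * s) * (H (θl + ((i + 1 : ℕ) : ℝ) * s) - H (θl + i * s)) with hS
  have e3 : I = S - (S - I) := by ring
  have : |I| ≤ |S| + |S - I| := by
    calc |I| = |S - (S - I)| := by rw [← e3]
      _ ≤ |S| + |S - I| := abs_sub _ _
  linarith


/-- **Lipschitz continuity of auction profit and of the auction value function.**  With
`M ≥ 2` bidders and profit from reserve price `r` given by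
`π(r,F) = ∫ 1{θ ≥ r} dF_{(2;M)}`, where `F_{(2;M)}(θ) = M F(θ)^{M−1}(1−F(θ)) + F(θ)^M`,
one has `|π(r,F) − π(r,G)| ≤ 2M(M−1)‖F − G‖_∞` for all `r ∈ Θ`, and the value function
`Π(F) = sup_r π(r,F)` is Lipschitz with the same constant. -/
theorem auction_profit_lipschitz
    (θl θu : ℝ) (hθ : θl ≤ θu) (M : ℕ) (hM : 2 ≤ M)
    (F G : ℝ → ℝ)
    (hF_mono : Monotone F) (hF_range : ∀ t, 0 ≤ F t ∧ F t ≤ 1)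
    (hF₀ : ∀ t, t < θl → F t = 0) (hF₁ : ∀ t, θu ≤ t → F t = 1)
    (hG_mono : Monotone G) (hG_range : ∀ t, 0 ≤ G t ∧ G t ≤ 1)
    (hG₀ : ∀ t, t < θl → G t = 0) (hG₁ : ∀ t, θu ≤ t → G t = 1)
    (π π' : ℝ → ℝ)
    -- `π r F = ∫_{θ̲}^{θ̄} 1{θ ≥ r} dF_{(2;M)}(θ)` (Riemann–Stieltjes)
    (hπ : ∀ r ∈ Set.Icc θl θu,
      HasRSIntegral (fun t => if r ≤ t then (1 : ℝ) else 0)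
        (fun t => M * F t ^ (M - 1) * (1 - F t) + F t ^ M) θl θu (π r))
    (hπ' : ∀ r ∈ Set.Icc θl θu,
      HasRSIntegral (fun t => if r ≤ t then (1 : ℝ) else 0)
        (fun t => M * G t ^ (M - 1) * (1 - G t) + G t ^ M) θl θu (π' r)) :
    (∀ r ∈ Set.Icc θl θu,
      |π r - π' r| ≤ 2 * M * (M - 1) * sSup ((fun t => |F t - G t|) '' Set.Icc θl θu)) ∧
    |sSup (π '' Set.Icc θl θu) - sSup (π' '' Set.Icc θl θu)| ≤
      2 * M * (M - 1) * sSup ((fun t => |F t - G t|) '' Set.Icc θl θu) := by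
  
  have hMR : (2 : ℝ) ≤ (M : ℝ) := by exact_mod_cast hM
  set K := sSup ((fun t => |F t - G t|) '' Set.Icc θl θu) with hK
  have hbdd : BddAbove ((fun t => |F t - G t|) '' Set.Icc θl θu) := by
    refine ⟨1, ?_⟩
    rintro x ⟨t, _, rfl⟩
    have h1 := hF_range t
    have h2 := hG_range t
    rw [abs_le]
    constructor <;> linarith [h1.1, h1.2, h2.1, h2.2]
  have hKub : ∀ t ∈ Set.Icc θl θu, |F t - G t| ≤ K :=
    fun t ht => le_csSup hbdd ⟨t, ht, rfl⟩
  have hK0 : 0 ≤ K := le_trans (abs_nonneg _) (hKub θl ⟨le_rfl, hθ⟩)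
  -- part 1
  have part1 : ∀ r ∈ Set.Icc θl θu, |π r - π' r| ≤ 2 * (M : ℝ) * ((M : ℝ) - 1) * K := by
    intro r hr
    have hint := (hπ r hr).sub' (hπ' r hr)
    refine key_bound θl θu hθ _ _ _ _ hint ?_
    intro n hn0 s hs0 hns
    have hTmem : ∀ i : ℕ, i ≤ n → θl + (i : ℝ) * s ∈ Set.Icc θl θu := by
      intro i hi
      constructor
      · nlinarith [Nat.cast_nonneg (α := ℝ) i]
      · have : ((i : ℝ)) ≤ (n : ℝ) := by exact_mod_cast hi
        nlinarith
    have := tele_bound n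
      (fun k => ((M : ℝ) * F (θl + k * s) ^ (M - 1) * (1 - F (θl + k * s)) + F (θl + k * s) ^ M)
        - ((M : ℝ) * G (θl + k * s) ^ (M - 1) * (1 - G (θl + k * s)) + G (θl + k * s) ^ M))
      (2 * (M : ℝ) * ((M : ℝ) - 1) * K)
      (fun i => r ≤ θl + (i : ℝ) * s)
      (fun i j hij hi => by
        have h1 : ((i : ℝ)) ≤ (j : ℝ) := by exact_mod_cast hij
        nlinarith)
      (fun i hi => by
        have hFr := hF_range (θl + (i : ℝ) * s)
        have hGr := hG_range (θl + (i : ℝ) * s)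
        calc |((M : ℝ) * F (θl + i * s) ^ (M - 1) * (1 - F (θl + i * s)) + F (θl + i * s) ^ M)
              - ((M : ℝ) * G (θl + i * s) ^ (M - 1) * (1 - G (θl + i * s)) + G (θl + i * s) ^ M)|
            ≤ 2 * (M : ℝ) * ((M : ℝ) - 1) * |F (θl + i * s) - G (θl + i * s)| :=
              phi_lip M hM hFr.1 hFr.2 hGr.1 hGr.2
          _ ≤ 2 * (M : ℝ) * ((M : ℝ) - 1) * K := by
              exact mul_le_mul_of_nonneg_left (hKub _ (hTmem i hi)) (by nlinarith))
      (by
        show ((M : ℝ) * F (θl + (n : ℝ) * s) ^ (M - 1) * (1 - F (θl + (n : ℝ) * s))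
            + F (θl + (n : ℝ) * s) ^ M)
          - ((M : ℝ) * G (θl + (n : ℝ) * s) ^ (M - 1) * (1 - G (θl + (n : ℝ) * s))
            + G (θl + (n : ℝ) * s) ^ M) = 0
        rw [hns, hF₁ θu le_rfl, hG₁ θu le_rfl]
        simp)
    exact this
  -- absolute bound for the profits
  have hB : ∀ (Fh p : ℝ → ℝ), Monotone Fh → (∀ t, 0 ≤ Fh t ∧ Fh t ≤ 1) →
      (∀ r ∈ Set.Icc θl θu, HasRSIntegral (fun t => if r ≤ t then (1 : ℝ) else 0)
        (fun t => M * Fh t ^ (M - 1) * (1 - Fh t) + Fh t ^ M) θl θu (p r)) →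
      ∀ r ∈ Set.Icc θl θu, |p r| ≤ 2 * (M : ℝ) * ((M : ℝ) - 1) := by
    intro Fh p hFhm hFhr hint r hr
    refine key_bound θl θu hθ _ _ _ _ (hint r hr) ?_
    intro n hn0 s hs0 hns
    calc |∑ i ∈ Finset.range n, (if r ≤ θl + (i : ℝ) * s then (1 : ℝ) else 0) *
            (((M : ℝ) * Fh (θl + ((i + 1 : ℕ) : ℝ) * s) ^ (M - 1) * (1 - Fh (θl + ((i + 1 : ℕ) : ℝ) * s))
                + Fh (θl + ((i + 1 : ℕ) : ℝ) * s) ^ M)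
              - ((M : ℝ) * Fh (θl + (i : ℝ) * s) ^ (M - 1) * (1 - Fh (θl + (i : ℝ) * s))
                + Fh (θl + (i : ℝ) * s) ^ M))|
        ≤ ∑ i ∈ Finset.range n, |(if r ≤ θl + (i : ℝ) * s then (1 : ℝ) else 0) *
            (((M : ℝ) * Fh (θl + ((i + 1 : ℕ) : ℝ) * s) ^ (M - 1) * (1 - Fh (θl + ((i + 1 : ℕ) : ℝ) * s))
                + Fh (θl + ((i + 1 : ℕ) : ℝ) * s) ^ M)
              - ((M : ℝ) * Fh (θl + (i : ℝ) * s) ^ (M - 1) * (1 - Fh (θl + (i : ℝ) * s))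
                + Fh (θl + (i : ℝ) * s) ^ M))| := Finset.abs_sum_le_sum_abs _ _
      _ ≤ ∑ i ∈ Finset.range n, 2 * (M : ℝ) * ((M : ℝ) - 1) *
            (Fh (θl + ((i + 1 : ℕ) : ℝ) * s) - Fh (θl + (i : ℝ) * s)) := by
          apply Finset.sum_le_sum
          intro i _
          have hr1 := hFhr (θl + ((i + 1 : ℕ) : ℝ) * s)
          have hr2 := hFhr (θl + (i : ℝ) * s)
          have hle : Fh (θl + (i : ℝ) * s) ≤ Fh (θl + ((i + 1 : ℕ) : ℝ) * s) := by
            apply hFhm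
            have hcast : ((i : ℕ) : ℝ) ≤ ((i + 1 : ℕ) : ℝ) := by exact_mod_cast Nat.le_succ i
            nlinarith
          have hphi := phi_lip M hM hr1.1 hr1.2 hr2.1 hr2.2
          rw [abs_mul]
          have hind : |(if r ≤ θl + (i : ℝ) * s then (1 : ℝ) else 0)| ≤ 1 := by
            split <;> simp
          have habs : |Fh (θl + ((i + 1 : ℕ) : ℝ) * s) - Fh (θl + (i : ℝ) * s)|
              = Fh (θl + ((i + 1 : ℕ) : ℝ) * s) - Fh (θl + (i : ℝ) * s) := abs_of_nonneg (by linarith)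
          rw [habs] at hphi
          have h0 : (0 : ℝ) ≤ |((M : ℝ) * Fh (θl + ((i + 1 : ℕ) : ℝ) * s) ^ (M - 1) *
              (1 - Fh (θl + ((i + 1 : ℕ) : ℝ) * s)) + Fh (θl + ((i + 1 : ℕ) : ℝ) * s) ^ M)
              - ((M : ℝ) * Fh (θl + (i : ℝ) * s) ^ (M - 1) * (1 - Fh (θl + (i : ℝ) * s))
                + Fh (θl + (i : ℝ) * s) ^ M)| := abs_nonneg _
          nlinarith
      _ = 2 * (M : ℝ) * ((M : ℝ) - 1) *
            (Fh (θl + ((n : ℕ) : ℝ) * s) - Fh (θl + ((0 : ℕ) : ℝ) * s)) := by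
          rw [← Finset.mul_sum, Finset.sum_range_sub (fun i : ℕ => Fh (θl + (i : ℝ) * s))]
      _ ≤ 2 * (M : ℝ) * ((M : ℝ) - 1) := by
          have h1 := hFhr (θl + ((n : ℕ) : ℝ) * s)
          have h2 := hFhr (θl + ((0 : ℕ) : ℝ) * s)
          have hc0 : (0 : ℝ) ≤ 2 * (M : ℝ) * ((M : ℝ) - 1) := by nlinarith
          have hxy : Fh (θl + ((n : ℕ) : ℝ) * s) - Fh (θl + ((0 : ℕ) : ℝ) * s) ≤ 1 := by
            linarith [h1.2, h2.1]
          have := mul_le_mul_of_nonneg_left hxy hc0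
          linarith
  have hBF := hB F π hF_mono hF_range hπ
  have hBG := hB G π' hG_mono hG_range hπ'
  -- part 2
  have hne : (Set.Icc θl θu).Nonempty := ⟨θl, le_rfl, hθ⟩
  have hAne : (π '' Set.Icc θl θu).Nonempty := hne.image _
  have hA'ne : (π' '' Set.Icc θl θu).Nonempty := hne.image _
  have hAbdd : BddAbove (π '' Set.Icc θl θu) := by
    refine ⟨2 * (M : ℝ) * ((M : ℝ) - 1), ?_⟩
    rintro y ⟨r, hr, rfl⟩
    exact le_trans (le_abs_self _) (hBF r hr)
  have hA'bdd : BddAbove (π' '' Set.Icc θl θu) := by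
    refine ⟨2 * (M : ℝ) * ((M : ℝ) - 1), ?_⟩
    rintro y ⟨r, hr, rfl⟩
    exact le_trans (le_abs_self _) (hBG r hr)
  have h1 : sSup (π '' Set.Icc θl θu) ≤ sSup (π' '' Set.Icc θl θu)
      + 2 * (M : ℝ) * ((M : ℝ) - 1) * K := by
    apply csSup_le hAne
    rintro y ⟨r, hr, rfl⟩
    have h2 : π r - π' r ≤ 2 * (M : ℝ) * ((M : ℝ) - 1) * K :=
      le_of_abs_le (part1 r hr)
    have h3 : π' r ≤ sSup (π' '' Set.Icc θl θu) := le_csSup hA'bdd ⟨r, hr, rfl⟩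
    linarith
  have h2 : sSup (π' '' Set.Icc θl θu) ≤ sSup (π '' Set.Icc θl θu)
      + 2 * (M : ℝ) * ((M : ℝ) - 1) * K := by
    apply csSup_le hA'ne
    rintro y ⟨r, hr, rfl⟩
    have h2' : π' r - π r ≤ 2 * (M : ℝ) * ((M : ℝ) - 1) * K := by
      have := part1 r hr
      rw [abs_sub_comm] at this
      exact le_of_abs_le this
    have h3 : π r ≤ sSup (π '' Set.Icc θl θu) := le_csSup hAbdd ⟨r, hr, rfl⟩
    linarith
  exact ⟨part1, abs_le.mpr ⟨by linarith, by linarith⟩⟩
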